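/- Spectral criterion for positivity of corotational rates with material spins: let λ₁, λ₂, λ₃ > 0, let b := diag(λ₁², λ₂², λ₃²), and let g_{ij} ∈ ℝ for i ≠ j in {1,2,3} satisfy g_{ji} = −g_{ij}. Define the linear map on symmetric 3×3 matrices by 𝔸.D := b D + D b + Σ_{i≠j} g_{ij} (λᵢ² − λⱼ²) Eᵢ D Eⱼ, where Eᵢ is the diagonal matrix projecting onto the i-th coordinate (so (Eᵢ D Eⱼ) has D_{ij} in position (i,j) and zeros elsewhere). Then for every symmetric D, ⟨𝔸.D, D⟩ = 2 Σ_{i=1}^{3} λᵢ² D_{ii}² + Σ_{i≠j} z_{ij} D_{ij}², where z_{ij} := λᵢ² + λⱼ² + g_{ij}(λᵢ² − λⱼ²); moreover ⟨𝔸.D, D⟩ > 0 for every nonzero symmetric D if and only if z_{ij} > 0 for all i ≠ j. -/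

import Mathlib

open Matrix

/-- The linear map `𝔸.D := b D + D b + Σ_{i≠j} g_{ij} (λᵢ² − λⱼ²) Eᵢ D Eⱼ` where
`b = diag(λ₁², λ₂², λ₃²)` and `Eᵢ` projects onto the `i`-th coordinate. -/
noncomputable def Aspec (lam : Fin 3 → ℝ) (g : Fin 3 → Fin 3 → ℝ)
    (D : Matrix (Fin 3) (Fin 3) ℝ) : Matrix (Fin 3) (Fin 3) ℝ :=
  Matrix.diagonal (fun i => (lam i) ^ 2) * D + D * Matrix.diagonal (fun i => (lam i) ^ 2)
    + ∑ i : Fin 3, ∑ j : Fin 3,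
        if i ≠ j then
          (g i j * ((lam i) ^ 2 - (lam j) ^ 2)) •
            (Matrix.single i i (1 : ℝ) * D * Matrix.single j j (1 : ℝ))
        else 0

lemma EiDEj (D : Matrix (Fin 3) (Fin 3) ℝ) (i j : Fin 3) :
    Matrix.single i i (1 : ℝ) * D * Matrix.single j j (1 : ℝ)
      = Matrix.single i j (D i j) := by
  ext a b
  simp [Matrix.mul_apply, Matrix.single, Finset.sum_ite_eq, Finset.sum_ite_eq',
    ite_and, Finset.mul_sum]
  aesop

lemma quad (lam : Fin 3 → ℝ) (g : Fin 3 → Fin 3 → ℝ)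
    (D : Matrix (Fin 3) (Fin 3) ℝ) (hD : Dᵀ = D) :
    ((Aspec lam g D) * Dᵀ).trace
      = 2 * ∑ i : Fin 3, (lam i) ^ 2 * (D i i) ^ 2
        + ∑ i : Fin 3, ∑ j : Fin 3,
            if i ≠ j then
              ((lam i) ^ 2 + (lam j) ^ 2 + g i j * ((lam i) ^ 2 - (lam j) ^ 2))
                * (D i j) ^ 2
            else 0 := by
  have h10 : D 1 0 = D 0 1 := by rw [← congrFun (congrFun hD 1) 0, transpose_apply]
  have h20 : D 2 0 = D 0 2 := by rw [← congrFun (congrFun hD 2) 0, transpose_apply]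
  have h21 : D 2 1 = D 1 2 := by rw [← congrFun (congrFun hD 2) 1, transpose_apply]
  simp only [Aspec, EiDEj]
  simp only [Matrix.trace, Matrix.diag, Matrix.mul_apply, Matrix.add_apply,
    Matrix.sum_apply, Matrix.smul_apply, Matrix.single, Matrix.diagonal,
    Matrix.transpose_apply, Matrix.of_apply, Fin.sum_univ_three, ne_eq,
    Matrix.zero_apply]
  norm_num [Fin.ext_iff, h10, h20, h21]
  ring

/-- Spectral criterion for positivity of corotational rates with
material spins: the quadratic form of `𝔸` is
`2 Σᵢ λᵢ² Dᵢᵢ² + Σ_{i≠j} z_{ij} Dᵢⱼ²` with `z_{ij} = λᵢ² + λⱼ² + g_{ij}(λᵢ² − λⱼ²)`,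
and `𝔸` is positive definite on symmetric matrices iff `z_{ij} > 0` for all `i ≠ j`. -/
theorem Aspec_quadratic_form_and_posDef_iff
    (lam : Fin 3 → ℝ) (hlam : ∀ i, 0 < lam i)
    (g : Fin 3 → Fin 3 → ℝ) (hg : ∀ i j, i ≠ j → g j i = -g i j) :
    (∀ D : Matrix (Fin 3) (Fin 3) ℝ, Dᵀ = D →
        ((Aspec lam g D) * Dᵀ).trace
          = 2 * ∑ i : Fin 3, (lam i) ^ 2 * (D i i) ^ 2
            + ∑ i : Fin 3, ∑ j : Fin 3,
                if i ≠ j then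
                  ((lam i) ^ 2 + (lam j) ^ 2 + g i j * ((lam i) ^ 2 - (lam j) ^ 2))
                    * (D i j) ^ 2
                else 0)
    ∧ ((∀ D : Matrix (Fin 3) (Fin 3) ℝ, Dᵀ = D → D ≠ 0 →
          0 < ((Aspec lam g D) * Dᵀ).trace)
        ↔ ∀ i j, i ≠ j →
            0 < (lam i) ^ 2 + (lam j) ^ 2 + g i j * ((lam i) ^ 2 - (lam j) ^ 2)) := by
  set z : Fin 3 → Fin 3 → ℝ :=
    fun i j => (lam i) ^ 2 + (lam j) ^ 2 + g i j * ((lam i) ^ 2 - (lam j) ^ 2) with hz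
  refine ⟨fun D hD => quad lam g D hD, ?_, ?_⟩
  · -- pos def → z_ij > 0
    intro hpos i j hij
    set D : Matrix (Fin 3) (Fin 3) ℝ :=
      Matrix.single i j 1 + Matrix.single j i 1 with hDdef
    have happ : ∀ a b, D a b
        = (if i = a ∧ j = b then (1:ℝ) else 0) + (if j = a ∧ i = b then (1:ℝ) else 0) :=
      fun a b => rfl
    have hDij : D i j = 1 := by
      rw [happ, if_pos ⟨rfl, rfl⟩, if_neg (fun h => hij h.2)]; norm_num
    have hDji : D j i = 1 := by
      rw [happ, if_neg (fun h => hij h.1), if_pos ⟨rfl, rfl⟩]; norm_num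
    have hDother : ∀ a b, ¬(a = i ∧ b = j) → ¬(a = j ∧ b = i) → D a b = 0 := by
      intro a b h1 h2
      rw [happ, if_neg (fun h => h1 ⟨h.1.symm, h.2.symm⟩),
        if_neg (fun h => h2 ⟨h.1.symm, h.2.symm⟩), add_zero]
    have hsym : Dᵀ = D := by
      ext a b
      rw [Matrix.transpose_apply, happ b a, happ a b, add_comm]
      exact congrArg₂ (· + ·) (if_congr and_comm rfl rfl) (if_congr and_comm rfl rfl)
    have hne : D ≠ 0 := fun h0 => by
      have := congrFun (congrFun h0 i) j
      rw [hDij] at this; simp at this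
    have hp := hpos D hsym hne
    rw [quad lam g D hsym] at hp
    have hdiag : ∀ a, D a a = 0 := fun a =>
      hDother a a (fun h => hij (h.1.symm.trans h.2)) (fun h => hij (h.2.symm.trans h.1))
    have hterm : ∀ a b, (if a ≠ b then z a b * D a b ^ 2 else 0)
        = (if a = i ∧ b = j then z i j else 0) + (if a = j ∧ b = i then z j i else 0) := by
      intro a b
      by_cases h1 : a = i ∧ b = j
      · obtain ⟨rfl, rfl⟩ := h1
        rw [if_pos hij, hDij, if_pos ⟨rfl, rfl⟩, if_neg (fun h => hij h.1)]
        ring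
      · by_cases h2 : a = j ∧ b = i
        · obtain ⟨rfl, rfl⟩ := h2
          rw [if_pos (Ne.symm hij), hDji, if_neg h1, if_pos ⟨rfl, rfl⟩]
          ring
        · rw [if_neg h1, if_neg h2]
          by_cases hab : a ≠ b
          · rw [if_pos hab, hDother a b h1 h2]; ring
          · rw [if_neg hab]; ring
    have hsum : (2 * ∑ a : Fin 3, (lam a) ^ 2 * (D a a) ^ 2
          + ∑ a : Fin 3, ∑ b : Fin 3, if a ≠ b then z a b * (D a b) ^ 2 else 0)
        = z i j + z j i := by
      simp only [hterm, hdiag]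
      rw [Finset.sum_congr rfl (fun a _ => Finset.sum_add_distrib), Finset.sum_add_distrib]
      simp [ite_and, Finset.sum_ite_eq', Finset.sum_ite_eq]
    rw [hsum] at hp
    have hgji : z j i = z i j := by simp only [hz]; rw [hg i j hij]; ring
    rw [hgji] at hp
    have hzp : 0 < z i j := by linarith
    simpa only [hz] using hzp
  · -- z_ij > 0 → pos def
    intro hzpos D hD hne
    rw [quad lam g D hD]
    obtain ⟨a, b, hab⟩ : ∃ a b, D a b ≠ 0 := by
      by_contra h; push_neg at h
      exact hne (Matrix.ext fun a b => h a b)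
    have hnnterm : ∀ i j : Fin 3, (0:ℝ) ≤
        if i ≠ j then z i j * (D i j) ^ 2 else 0 := by
      intro i j
      by_cases h : i ≠ j
      · rw [if_pos h]; exact mul_nonneg (hzpos i j h).le (sq_nonneg _)
      · rw [if_neg h]
    have hnn2 : (0:ℝ) ≤ ∑ i : Fin 3, ∑ j : Fin 3,
        if i ≠ j then z i j * (D i j) ^ 2 else 0 :=
      Finset.sum_nonneg fun i _ => Finset.sum_nonneg fun j _ => hnnterm i j
    have hnn1 : (0:ℝ) ≤ ∑ i : Fin 3, (lam i) ^ 2 * (D i i) ^ 2 :=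
      Finset.sum_nonneg fun i _ => mul_nonneg (sq_nonneg _) (sq_nonneg _)
    by_cases hdiag : a = b
    · subst hdiag
      have h1 : (0:ℝ) < ∑ i : Fin 3, (lam i) ^ 2 * (D i i) ^ 2 := by
        refine Finset.sum_pos' (fun i _ => mul_nonneg (sq_nonneg _) (sq_nonneg _))
          ⟨a, Finset.mem_univ a, ?_⟩
        have h2 : (0:ℝ) < (D a a) ^ 2 := by positivity
        exact mul_pos (pow_pos (hlam a) 2) h2
      linarith
    · have h2 : (0:ℝ) < ∑ i : Fin 3, ∑ j : Fin 3,
          if i ≠ j then z i j * (D i j) ^ 2 else 0 := by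
        refine Finset.sum_pos' (fun i _ => Finset.sum_nonneg fun j _ => hnnterm i j)
          ⟨a, Finset.mem_univ a, ?_⟩
        refine Finset.sum_pos' (fun j _ => hnnterm a j) ⟨b, Finset.mem_univ b, ?_⟩
        rw [if_pos hdiag]
        have h3 : (0:ℝ) < (D a b) ^ 2 := by positivity
        exact mul_pos (hzpos a b hdiag) h3
      linarith
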